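/- arXiv:math/0503427 — 4 statements merged into one kernel-verified Lean document; each statement's English description precedes it below -/
import Mathlib

section
/- Let X be a locally compact Hausdorff space, k : X × X → [0,∞) a continuous, symmetric, nonnegative kernel, and K ⊆ X a nonempty compact set. Let μ ∈ 𝔐₁(K) be a measure of minimal energy, i.e., W(μ) = w(K). Then: (A) U^μ(x) ≥ w(K) for every x ∈ K; (B) U^μ(x) ≤ w(K) for every x in the support of μ; and (C) U^μ(x) = w(K) for μ-almost every x ∈ X. -/
open MeasureTheory Set Filter Topology ENNReal

namespace Rendezvous

variable {X : Type*} [MeasurableSpace X]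

/-- The potential of a measure `μ` with respect to the kernel `k`. -/
noncomputable def potential (k : X → X → ℝ≥0∞) (μ : Measure X) (x : X) : ℝ≥0∞ :=
  ∫⁻ y, k x y ∂μ

/-- `𝔐₁(H)`: Borel probability measures giving full mass to `H`. -/
def M1 (H : Set X) : Set (Measure X) :=
  {μ | IsProbabilityMeasure μ ∧ μ H = 1}

/-- `Q(μ,L) = sup_{x ∈ L} U^μ(x)`. -/
noncomputable def Qsup (k : X → X → ℝ≥0∞) (μ : Measure X) (L : Set X) : ℝ≥0∞ :=
  ⨆ x ∈ L, potential k μ x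

/-- `Q̲(μ,L) = inf_{x ∈ L} U^μ(x)`. -/
noncomputable def Qinf (k : X → X → ℝ≥0∞) (μ : Measure X) (L : Set X) : ℝ≥0∞ :=
  ⨅ x ∈ L, potential k μ x

/-- `q(H,L) = inf_{μ ∈ 𝔐₁(H)} Q(μ,L)`. -/
noncomputable def qHL (k : X → X → ℝ≥0∞) (H L : Set X) : ℝ≥0∞ :=
  ⨅ μ ∈ M1 H, Qsup k μ L

/-- `q̲(H,L) = sup_{μ ∈ 𝔐₁(H)} Q̲(μ,L)`. -/
noncomputable def qlowHL (k : X → X → ℝ≥0∞) (H L : Set X) : ℝ≥0∞ :=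
  ⨆ μ ∈ M1 H, Qinf k μ L

/-- The `n`-th Chebyshev constant `M_n(H,L)`. -/
noncomputable def chebyshev (k : X → X → ℝ≥0∞) (n : ℕ) (H L : Set X) : ℝ≥0∞ :=
  ⨆ (w : Fin n → X) (_ : ∀ i, w i ∈ H), ⨅ x ∈ L, (∑ j, k x (w j)) / (n : ℝ≥0∞)

/-- The `n`-th dual Chebyshev constant `M̄_n(H,L)`. -/
noncomputable def dualChebyshev (k : X → X → ℝ≥0∞) (n : ℕ) (H L : Set X) : ℝ≥0∞ :=
  ⨅ (w : Fin n → X) (_ : ∀ i, w i ∈ H), ⨆ x ∈ L, (∑ j, k x (w j)) / (n : ℝ≥0∞)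

/-- `M(H,L) = sup_{n ≥ 1} M_n(H,L)`. -/
noncomputable def chebyshevConst (k : X → X → ℝ≥0∞) (H L : Set X) : ℝ≥0∞ :=
  ⨆ n ≥ 1, chebyshev k n H L

/-- `M̄(H,L) = inf_{n ≥ 1} M̄_n(H,L)`. -/
noncomputable def dualChebyshevConst (k : X → X → ℝ≥0∞) (H L : Set X) : ℝ≥0∞ :=
  ⨅ n ≥ 1, dualChebyshev k n H L

/-- The energy `W(μ)` of a measure. -/
noncomputable def energy (k : X → X → ℝ≥0∞) (μ : Measure X) : ℝ≥0∞ :=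
  ∫⁻ x, ∫⁻ y, k x y ∂μ ∂μ

/-- The Wiener energy `w(H)` of a set: the infimum of energies of probability
measures with compact support contained in `H`. -/
noncomputable def wienerEnergy [TopologicalSpace X] (k : X → X → ℝ≥0∞) (H : Set X) : ℝ≥0∞ :=
  ⨅ μ ∈ {μ : Measure X | IsProbabilityMeasure μ ∧ ∃ C, IsCompact C ∧ C ⊆ H ∧ μ C = 1},
    energy k μ

/-- The support of a measure: points all of whose open neighbourhoods have
positive measure. -/
def msupport [TopologicalSpace X] (μ : Measure X) : Set X :=
  {x | ∀ U : Set X, IsOpen U → x ∈ U → 0 < μ U}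


lemma potential_lsc' {X : Type*} [TopologicalSpace X] [T2Space X]
    [MeasurableSpace X] [BorelSpace X]
    (k : X → X → ℝ≥0∞)
    (hk_cont : Continuous fun p : X × X => k p.1 p.2)
    (hk_fin : ∀ x y, k x y ≠ ∞)
    (K : Set X) (hK : IsCompact K)
    (μ : Measure X) [IsProbabilityMeasure μ] (hμK : μ K = 1)
    (x₁ : X) (ε : ℝ≥0∞) (hε0 : ε ≠ 0) :
    ∃ V : Set X, IsOpen V ∧ x₁ ∈ V ∧ ∀ x ∈ V, potential k μ x₁ ≤ potential k μ x + ε := by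
  rcases eq_or_ne ε ∞ with hε | hεfin
  · exact ⟨univ, isOpen_univ, mem_univ _, fun x _ => by simp [hε]⟩
  have hδ0 : ε / 2 ≠ 0 := by simp [hε0]
  have hδfin : ε / 2 ≠ ∞ := (ENNReal.div_lt_top hεfin (by norm_num)).ne
  -- key pointwise estimate on a neighborhood
  have key : ∀ y : K, ∃ V W : Set X, IsOpen V ∧ x₁ ∈ V ∧ IsOpen W ∧ (y : X) ∈ W ∧
      ∀ x ∈ V, ∀ z ∈ W, k x₁ z ≤ k x z + ε := by
    rintro ⟨y, hy⟩
    have hT : IsOpen {p : X × X | k x₁ y < k p.1 p.2 + ε / 2} :=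
      isOpen_lt continuous_const (hk_cont.add continuous_const)
    have hTmem : (x₁, y) ∈ {p : X × X | k x₁ y < k p.1 p.2 + ε / 2} :=
      ENNReal.lt_add_right (hk_fin x₁ y) hδ0
    obtain ⟨u, v, hu, hv, hxu, hyv, huv⟩ := isOpen_prod_iff.1 hT _ _ hTmem
    have hky : Continuous fun z => k x₁ z :=
      hk_cont.comp (continuous_const.prodMk continuous_id)
    have hS : IsOpen {z | k x₁ z < k x₁ y + ε / 2} :=
      isOpen_lt hky continuous_const
    refine ⟨u, v ∩ {z | k x₁ z < k x₁ y + ε / 2}, hu, hxu, hv.inter hS,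
      ⟨hyv, ENNReal.lt_add_right (hk_fin x₁ y) hδ0⟩, ?_⟩
    rintro x hx z ⟨hzv, hzS⟩
    have h1 : k x₁ z < k x₁ y + ε / 2 := hzS
    have h2 : k x₁ y < k x z + ε / 2 := huv (mk_mem_prod hx hzv)
    calc k x₁ z ≤ k x₁ y + ε / 2 := h1.le
      _ ≤ (k x z + ε / 2) + ε / 2 := add_le_add h2.le le_rfl
      _ = k x z + ε := by rw [add_assoc, ENNReal.add_halves]
  choose V W hVo hxV hWo hyW hVW using key
  obtain ⟨t, ht⟩ := hK.elim_finite_subcover W (fun y => hWo y)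
    (fun z hz => mem_iUnion.2 ⟨⟨z, hz⟩, hyW ⟨z, hz⟩⟩)
  refine ⟨⋂ y ∈ t, V y, isOpen_biInter_finset (fun y _ => hVo y),
    mem_iInter₂.2 fun y _ => hxV y, fun x hx => ?_⟩
  have hpt : ∀ z ∈ K, k x₁ z ≤ k x z + ε := by
    intro z hz
    obtain ⟨y, hyt, hzW⟩ := mem_iUnion₂.1 (ht hz)
    exact hVW y x (mem_iInter₂.1 hx y hyt) z hzW
  have haeK : ∀ᵐ z ∂μ, z ∈ K := by
    have : μ Kᶜ = 0 := by
      rw [measure_compl hK.isClosed.measurableSet (measure_ne_top μ K), hμK, measure_univ,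
        tsub_self]
    exact (ae_iff.2 this)
  calc potential k μ x₁ ≤ ∫⁻ z, (k x z + ε) ∂μ :=
        lintegral_mono_ae (haeK.mono fun z hz => hpt z hz)
    _ = potential k μ x + ε := by
        rw [lintegral_add_right _ measurable_const, lintegral_const, measure_univ, mul_one]
        rfl

lemma potential_lowerSemicontinuous {X : Type*} [TopologicalSpace X] [T2Space X]
    [MeasurableSpace X] [BorelSpace X]
    (k : X → X → ℝ≥0∞)
    (hk_cont : Continuous fun p : X × X => k p.1 p.2)
    (hk_fin : ∀ x y, k x y ≠ ∞)
    (K : Set X) (hK : IsCompact K)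
    (μ : Measure X) [IsProbabilityMeasure μ] (hμK : μ K = 1) :
    LowerSemicontinuous (potential k μ) := by
  intro x₁ y hy
  rcases eq_or_ne (potential k μ x₁) ∞ with hPfin | hPfin
  · obtain ⟨V, hVo, hxV, hVle⟩ := potential_lsc' k hk_cont hk_fin K hK μ hμK x₁ 1 one_ne_zero
    filter_upwards [hVo.mem_nhds hxV] with x hx
    have h1 : (⊤:ℝ≥0∞) ≤ potential k μ x + 1 := hPfin ▸ hVle x hx
    have h2 : potential k μ x = ⊤ := by
      simpa [ENNReal.add_eq_top] using top_le_iff.1 h1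
    rw [h2]
    exact hy.trans_le le_top
  · have hyfin : y ≠ ∞ := (hy.trans_le le_top).ne_top
    set ε := (potential k μ x₁ - y) / 2 with hε
    have hsub0 : potential k μ x₁ - y ≠ 0 := (tsub_pos_of_lt hy).ne'
    have hε0 : ε ≠ 0 := by
      simp only [hε, ne_eq, ENNReal.div_eq_zero_iff]
      push_neg
      exact ⟨hsub0, by norm_num⟩
    have hεfin : ε ≠ ∞ := by
      rw [hε]
      exact (ENNReal.div_lt_top (by simp [hPfin, hyfin]) (by norm_num)).ne
    obtain ⟨V, hVo, hxV, hVle⟩ := potential_lsc' k hk_cont hk_fin K hK μ hμK x₁ ε hε0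
    filter_upwards [hVo.mem_nhds hxV] with x hx
    have key : y + 2 * ε ≤ potential k μ x + ε := by
      have : y + 2 * ε = potential k μ x₁ := by
        rw [hε, ENNReal.mul_div_cancel' (by norm_num) (by norm_num)]
        exact add_tsub_cancel_of_le hy.le
      rw [this]
      exact hVle x hx
    have : y + ε ≤ potential k μ x := by
      have h2 : y + ε + ε ≤ potential k μ x + ε := by
        rw [add_assoc]
        calc y + (ε + ε) = y + 2 * ε := by rw [two_mul]
          _ ≤ _ := key
      exact (ENNReal.add_le_add_iff_right hεfin).1 h2
    exact lt_of_lt_of_le (ENNReal.lt_add_right hyfin hε0) this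


lemma wienerEnergy_le {X : Type*} [TopologicalSpace X]
    [MeasurableSpace X]
    (k : X → X → ℝ≥0∞) (K : Set X) (hK : IsCompact K)
    (ν : Measure X) (h1 : IsProbabilityMeasure ν) (h2 : ν K = 1) :
    wienerEnergy k K ≤ energy k ν :=
  iInf₂_le ν ⟨h1, K, hK, subset_rfl, h2⟩

lemma partA {X : Type*} [TopologicalSpace X] [T2Space X]
    [MeasurableSpace X] [BorelSpace X]
    (k : X → X → ℝ≥0∞)
    (hk_cont : Continuous fun p : X × X => k p.1 p.2)
    (hk_sym : ∀ x y, k x y = k y x)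
    (hk_fin : ∀ x y, k x y ≠ ∞)
    (K : Set X) (hK : IsCompact K)
    (μ : Measure X) [IsProbabilityMeasure μ] (hμK : μ K = 1)
    (hwfin : wienerEnergy k K ≠ ∞)
    (hmin : energy k μ = wienerEnergy k K)
    (x₀ : X) (hx₀ : x₀ ∈ K) :
    wienerEnergy k K ≤ potential k μ x₀ := by
  by_contra hlt
  push_neg at hlt
  have hk1 : ∀ x, Measurable (k x) := fun x =>
    (hk_cont.comp (continuous_const.prodMk continuous_id)).measurable
  have hk2 : ∀ y, Measurable fun x => k x y := fun y =>
    (hk_cont.comp (continuous_id.prodMk continuous_const)).measurable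
  have hP : Measurable (potential k μ) :=
    (potential_lowerSemicontinuous k hk_cont hk_fin K hK μ hμK).measurable
  set a := wienerEnergy k K with ha
  set U := potential k μ x₀ with hUdef
  set c := k x₀ x₀ with hcdef
  have hUfin : U ≠ ∞ := hlt.ne_top
  have hcfin : c ≠ ∞ := hk_fin x₀ x₀
  -- real versions
  set A := a.toReal with hA
  set UR := U.toReal with hUR
  set C := c.toReal with hC
  have hA0 : 0 ≤ A := ENNReal.toReal_nonneg
  have hUR0 : 0 ≤ UR := ENNReal.toReal_nonneg
  have hC0 : 0 ≤ C := ENNReal.toReal_nonneg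
  have hUA : UR < A := (ENNReal.toReal_lt_toReal hUfin hwfin).2 hlt
  -- choose t
  set tR : ℝ := min 1 ((A - UR) / (A + C + 1)) with htR
  have hden : (0:ℝ) < A + C + 1 := by linarith
  have htR0 : 0 < tR := lt_min one_pos (div_pos (by linarith) hden)
  have htR1 : tR ≤ 1 := min_le_left _ _
  have htprod : tR * (A + C + 1) ≤ A - UR := by
    rw [← le_div_iff₀ hden]
    exact min_le_right _ _
  set t : ℝ≥0∞ := ENNReal.ofReal tR with ht
  have ht0 : t ≠ 0 := by simp [ht, htR0, ENNReal.ofReal_pos.2 htR0 |>.ne']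
  have ht1 : t ≤ 1 := by
    rw [ht, ← ENNReal.ofReal_one]
    exact ENNReal.ofReal_le_ofReal htR1
  have htfin : t ≠ ∞ := ENNReal.ofReal_ne_top
  have httR : t.toReal = tR := ENNReal.toReal_ofReal htR0.le
  set s : ℝ≥0∞ := 1 - t with hs
  have hsfin : s ≠ ∞ := (tsub_le_self.trans_lt (by norm_num : (1:ℝ≥0∞) < ∞)).ne
  have hst : s + t = 1 := tsub_add_cancel_of_le ht1
  have hsR : s.toReal = 1 - tR := by
    rw [hs, ENNReal.toReal_sub_of_le ht1 one_ne_top, ENNReal.toReal_one, httR]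
  -- the perturbed measure
  set ν : Measure X := s • μ + t • Measure.dirac x₀ with hν
  have hν1 : IsProbabilityMeasure ν := by
    constructor
    simp only [hν, Measure.coe_add, Measure.coe_smul, Pi.add_apply, Pi.smul_apply,
      smul_eq_mul, measure_univ, mul_one]
    exact hst
  have hνK : ν K = 1 := by
    simp only [hν, Measure.coe_add, Measure.coe_smul, Pi.add_apply, Pi.smul_apply,
      smul_eq_mul, hμK, Measure.dirac_apply_of_mem hx₀, mul_one]
    exact hst
  -- energy of ν
  have hpot : ∀ x, (∫⁻ y, k x y ∂ν) = s * potential k μ x + t * k x x₀ := by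
    intro x
    rw [hν, lintegral_add_measure, lintegral_smul_measure, lintegral_smul_measure,
      lintegral_dirac' _ (hk1 x)]
    rfl
  have hsymint : (∫⁻ x, k x x₀ ∂μ) = U := by
    rw [hUdef]
    exact lintegral_congr fun x => hk_sym x x₀
  have hintμ : (∫⁻ x, (s * potential k μ x + t * k x x₀) ∂μ) = s * a + t * U := by
    rw [lintegral_add_left (hP.const_mul s), lintegral_const_mul _ hP,
      lintegral_const_mul _ (hk2 x₀), hsymint]
    congr 1
    rw [← hmin]
    rfl
  have hEν : energy k ν = s * (s * a + t * U) + t * (s * U + t * c) := by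
    show (∫⁻ x, ∫⁻ y, k x y ∂ν ∂ν) = _
    rw [lintegral_congr hpot, hν, lintegral_add_measure, lintegral_smul_measure,
      lintegral_smul_measure, lintegral_dirac' _ (show Measurable (fun a => s * potential k μ a + t * k a x₀) from (hP.const_mul s).add ((hk2 x₀).const_mul t)),
      hintμ]
    rfl
  have hineq : a ≤ s * (s * a + t * U) + t * (s * U + t * c) := by
    rw [← hEν]
    exact wienerEnergy_le k K hK ν hν1 hνK
  -- pass to reals
  have h1fin : s * a + t * U ≠ ∞ := by finiteness
  have h2fin : s * U + t * c ≠ ∞ := by finiteness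
  have hRfin : s * (s * a + t * U) + t * (s * U + t * c) ≠ ∞ := by finiteness
  have hreal : A ≤ (1 - tR) * ((1 - tR) * A + tR * UR) + tR * ((1 - tR) * UR + tR * C) := by
    have := ENNReal.toReal_mono hRfin hineq
    rwa [ENNReal.toReal_add (by finiteness) (by finiteness), ENNReal.toReal_mul,
      ENNReal.toReal_mul, ENNReal.toReal_add (by finiteness) (by finiteness),
      ENNReal.toReal_add (by finiteness) (by finiteness), ENNReal.toReal_mul,
      ENNReal.toReal_mul, ENNReal.toReal_mul, ENNReal.toReal_mul, hsR, httR] at this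
  nlinarith [mul_le_mul_of_nonneg_left htprod htR0.le, sq_nonneg tR,
    mul_pos htR0 (sub_pos.2 hUA), mul_nonneg (mul_nonneg htR0.le htR0.le) hUR0,
    mul_nonneg htR0.le hUR0, mul_nonneg htR0.le hC0]


/-- Frostman's theorem (Fuglede's version) for a continuous, symmetric,
nonnegative, finite-valued kernel on a locally compact Hausdorff space and a nonempty
compact set `K`: any energy-minimizing `μ ∈ 𝔐₁(K)` satisfies
(A) `U^μ ≥ w(K)` everywhere on `K`; (B) `U^μ ≤ w(K)` on `supp μ`;
(C) `U^μ = w(K)` μ-almost everywhere. -/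
theorem frostman {X : Type*}
    [TopologicalSpace X] [T2Space X] [LocallyCompactSpace X]
    [MeasurableSpace X] [BorelSpace X]
    (k : X → X → ℝ≥0∞)
    (hk_cont : Continuous fun p : X × X => k p.1 p.2)
    (hk_sym : ∀ x y, k x y = k y x)
    (hk_fin : ∀ x y, k x y ≠ ∞)
    (K : Set X) (hK : IsCompact K) (hKne : K.Nonempty)
    (μ : Measure X) (hμ : μ ∈ M1 K)
    (hmin : energy k μ = wienerEnergy k K) :
    (∀ x ∈ K, wienerEnergy k K ≤ potential k μ x) ∧
    (∀ x ∈ msupport μ, potential k μ x ≤ wienerEnergy k K) ∧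
    (∀ᵐ x ∂μ, potential k μ x = wienerEnergy k K) := by
  obtain ⟨hprob, hμK⟩ := hμ
  haveI := hprob
  have hk1 : ∀ x, Measurable (k x) := fun x =>
    (hk_cont.comp (continuous_const.prodMk continuous_id)).measurable
  have hk2 : ∀ y, Measurable fun x => k x y := fun y =>
    (hk_cont.comp (continuous_id.prodMk continuous_const)).measurable
  have hP : Measurable (potential k μ) :=
    (potential_lowerSemicontinuous k hk_cont hk_fin K hK μ hμK).measurable
  have hwfin : wienerEnergy k K ≠ ∞ := by
    obtain ⟨x₀, hx₀⟩ := hKne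
    have hle : wienerEnergy k K ≤ energy k (Measure.dirac x₀) := by
      refine iInf₂_le _ ⟨inferInstance, {x₀}, isCompact_singleton,
        singleton_subset_iff.2 hx₀, ?_⟩
      simp
    have hE : energy k (Measure.dirac x₀) = k x₀ x₀ := by
      show (∫⁻ x, ∫⁻ y, k x y ∂(Measure.dirac x₀) ∂(Measure.dirac x₀)) = _
      rw [lintegral_congr (fun x => lintegral_dirac' x₀ (hk1 x)), lintegral_dirac' _ (hk2 x₀)]
    exact ne_top_of_le_ne_top (hE ▸ hk_fin x₀ x₀) hle
  have hA : ∀ x ∈ K, wienerEnergy k K ≤ potential k μ x := fun x hx =>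
    partA k hk_cont hk_sym hk_fin K hK μ hμK hwfin hmin x hx
  have haeK : ∀ᵐ x ∂μ, x ∈ K := by
    have : μ Kᶜ = 0 := by
      rw [measure_compl hK.isClosed.measurableSet (measure_ne_top μ K), hμK, measure_univ,
        tsub_self]
    exact (ae_iff.2 this)
  have hintE : (∫⁻ x, potential k μ x ∂μ) = wienerEnergy k K := hmin
  have hae_ge : ∀ᵐ x ∂μ, wienerEnergy k K ≤ potential k μ x :=
    haeK.mono fun x hx => hA x hx
  refine ⟨hA, ?_, ?_⟩
  · -- part B
    intro x₁ hx₁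
    by_contra hgt
    push_neg at hgt
    have hsub0 : (potential k μ x₁ - wienerEnergy k K) ≠ 0 := (tsub_pos_of_lt hgt).ne'
    set ε : ℝ≥0∞ := min 1 ((potential k μ x₁ - wienerEnergy k K) / 2) with hε
    have hε0 : ε ≠ 0 :=
      (lt_min one_pos (ENNReal.div_pos hsub0 (by norm_num))).ne'
    have hεfin : ε ≠ ∞ := ((min_le_left _ _).trans_lt one_lt_top).ne
    have hδ0 : ε / 2 ≠ 0 := by simp [hε0]
    have hδfin : ε / 2 ≠ ∞ := (ENNReal.div_lt_top hεfin (by norm_num)).ne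
    have hkey : wienerEnergy k K + ε < potential k μ x₁ := by
      rcases eq_or_ne (potential k μ x₁) ∞ with h | h
      · rw [h]
        exact ENNReal.add_lt_top.2 ⟨hwfin.lt_top, hεfin.lt_top⟩
      · have h2 : ε < potential k μ x₁ - wienerEnergy k K :=
          (min_le_right _ _).trans_lt (ENNReal.half_lt_self hsub0 (ENNReal.sub_ne_top h))
        calc wienerEnergy k K + ε
            < wienerEnergy k K + (potential k μ x₁ - wienerEnergy k K) :=
              ENNReal.add_lt_add_left hwfin h2
          _ = potential k μ x₁ := add_tsub_cancel_of_le hgt.le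
    obtain ⟨V, hVo, hxV, hVle⟩ :=
      potential_lsc' k hk_cont hk_fin K hK μ hμK x₁ (ε / 2) hδ0
    have hgap : ∀ x ∈ V, wienerEnergy k K + ε / 2 ≤ potential k μ x := by
      intro x hx
      have h1 : wienerEnergy k K + ε < potential k μ x + ε / 2 :=
        hkey.trans_le (hVle x hx)
      have h2 : wienerEnergy k K + ε / 2 + ε / 2 < potential k μ x + ε / 2 := by
        rw [add_assoc, ENNReal.add_halves]; exact h1
      exact ((ENNReal.add_lt_add_iff_right hδfin).1 h2).le
    have hμV : 0 < μ V := hx₁ V hVo hxV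
    have hsplit : (∫⁻ x in V, potential k μ x ∂μ) + (∫⁻ x in Vᶜ, potential k μ x ∂μ)
        = wienerEnergy k K := by
      rw [lintegral_add_compl _ hVo.measurableSet]; exact hintE
    have hV1 : (wienerEnergy k K + ε / 2) * μ V ≤ ∫⁻ x in V, potential k μ x ∂μ := by
      rw [← setLIntegral_const V (wienerEnergy k K + ε / 2)]
      exact setLIntegral_mono' hVo.measurableSet fun x hx => hgap x hx
    have hV2 : wienerEnergy k K * μ Vᶜ ≤ ∫⁻ x in Vᶜ, potential k μ x ∂μ := by
      rw [← setLIntegral_const Vᶜ (wienerEnergy k K)]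
      exact lintegral_mono_ae (ae_restrict_of_ae hae_ge)
    have hcontr : wienerEnergy k K + ε / 2 * μ V ≤ wienerEnergy k K := by
      calc wienerEnergy k K + ε / 2 * μ V
          = wienerEnergy k K * (μ V + μ Vᶜ) + ε / 2 * μ V := by
            rw [measure_add_measure_compl hVo.measurableSet, measure_univ, mul_one]
        _ = (wienerEnergy k K + ε / 2) * μ V + wienerEnergy k K * μ Vᶜ := by ring
        _ ≤ _ := add_le_add hV1 hV2
        _ = wienerEnergy k K := hsplit
    exact absurd hcontr
      (ENNReal.lt_add_right hwfin (mul_ne_zero hδ0 hμV.ne')).not_ge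
  · -- part C
    have hconst : (∫⁻ _, wienerEnergy k K ∂μ) = wienerEnergy k K := by
      simp [lintegral_const]
    have hzero : (∫⁻ x, (potential k μ x - wienerEnergy k K) ∂μ) = 0 := by
      rw [lintegral_sub measurable_const (by rw [hconst]; exact hwfin) hae_ge, hintE,
        hconst, tsub_self]
    have hae0 := (lintegral_eq_zero_iff (hP.sub measurable_const)).1 hzero
    filter_upwards [hae0, hae_ge] with x h1 h2
    simp only [Pi.zero_apply] at h1
    exact le_antisymm (tsub_eq_zero_iff_le.1 h1) h2


end Rendezvous
end

section
/- Let X be a locally compact Hausdorff space, k a kernel on X, H ⊆ X arbitrary and K ⊆ X a nonempty compact set. Then there exists μ ∈ 𝔐₁(K) attaining the infimum defining q(K,H): namely, sup_{x∈H} U^μ(x) ≤ q(K,H) (hence sup_{x∈H} U^μ(x) = q(K,H)). -/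
open MeasureTheory Set Filter Topology ENNReal

namespace Rendezvous

variable {X : Type*} [MeasurableSpace X]

open TopologicalSpace

/-- Pointwise layer-cake bound: `c ≤ δ + ∑_{j : (j+1)δ < c} δ`. -/
lemma layer_aux (δ c : ℝ≥0∞) (hδ : δ ≠ 0) :
    c ≤ δ + ∑' j : ℕ, ({i : ℕ | ((i : ℝ≥0∞) + 1) * δ < c}).indicator (fun _ => δ) j := by
  classical
  by_cases h : ∀ j : ℕ, ((j : ℝ≥0∞) + 1) * δ < c
  · have h1 : ∑' j : ℕ, ({i : ℕ | ((i : ℝ≥0∞) + 1) * δ < c}).indicator (fun _ => δ) j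
        = ∑' _ : ℕ, δ := tsum_congr fun j =>
      Set.indicator_of_mem (show j ∈ {i : ℕ | ((i : ℝ≥0∞) + 1) * δ < c} from h j) (fun _ => δ)
    rw [h1, ENNReal.tsum_const_eq_top_of_ne_zero hδ]
    exact le_top.trans (le_add_self)
  · push_neg at h
    set m := Nat.find h with hm
    have hmc : c ≤ ((m : ℝ≥0∞) + 1) * δ := Nat.find_spec h
    have hlt : ∀ i < m, ((i : ℝ≥0∞) + 1) * δ < c := fun i hi =>
      not_le.mp (Nat.find_min h hi)
    have hsum : (m : ℝ≥0∞) * δ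
        ≤ ∑' j : ℕ, ({i : ℕ | ((i : ℝ≥0∞) + 1) * δ < c}).indicator (fun _ => δ) j := by
      calc (m : ℝ≥0∞) * δ
          = ∑ _i ∈ Finset.range m, δ := by simp [Finset.sum_const, nsmul_eq_mul]
        _ = ∑ i ∈ Finset.range m,
              ({i : ℕ | ((i : ℝ≥0∞) + 1) * δ < c}).indicator (fun _ => δ) i :=
            Finset.sum_congr rfl fun i hi =>
              (Set.indicator_of_mem (show i ∈ {i : ℕ | ((i : ℝ≥0∞) + 1) * δ < c} from
                hlt i (Finset.mem_range.mp hi)) (fun _ => δ)).symm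
        _ ≤ _ := ENNReal.sum_le_tsum _
    calc c ≤ ((m : ℝ≥0∞) + 1) * δ := hmc
      _ = δ + (m : ℝ≥0∞) * δ := by ring
      _ ≤ _ := add_le_add_right hsum δ

/-- Counting bound: a finite sum of indicators of sets `D j` contained in the
superlevel sets `{(j+1)δ < c}` is bounded by `c`. -/
lemma count_aux {Y : Type*} (δ c : ℝ≥0∞) (s : Finset ℕ) (D : ℕ → Set Y) (y : Y)
    (hP : ∀ j, y ∈ D j → ((j : ℝ≥0∞) + 1) * δ < c) :
    (∑ j ∈ s, (D j).indicator (fun _ => δ) y) ≤ c := by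
  classical
  set t := s.filter (fun j => y ∈ D j) with ht
  have hsum : ∑ j ∈ s, (D j).indicator (fun _ => δ) y = ∑ _j ∈ t, δ := by
    rw [ht, Finset.sum_filter]
    exact Finset.sum_congr rfl fun j _ => by simp [Set.indicator_apply]
  rw [hsum]
  rcases t.eq_empty_or_nonempty with h | h
  · simp [h]
  · have hmem : y ∈ D (t.max' h) := (Finset.mem_filter.mp (t.max'_mem h)).2
    calc ∑ _j ∈ t, δ = (t.card : ℝ≥0∞) * δ := by simp [Finset.sum_const, nsmul_eq_mul]
      _ ≤ ((t.max' h : ℝ≥0∞) + 1) * δ := by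
          apply mul_le_mul_left
          have hcard : t.card ≤ t.max' h + 1 := by
            have hsub : t ⊆ Finset.range (t.max' h + 1) := fun j hj =>
              Finset.mem_range.mpr (Nat.lt_succ_of_le (t.le_max' j hj))
            simpa using Finset.card_le_card hsub
          have := (Nat.cast_le (α := ℝ≥0∞)).mpr hcard
          push_cast at this
          exact this
      _ ≤ c := (hP _ hmem).le

/-- For `H ⊆ X` arbitrary and `K ⊆ X` nonempty compact, the infimum
defining `q(K,H)` is attained: there is `μ ∈ 𝔐₁(K)` with
`sup_{x∈H} U^μ(x) ≤ q(K,H)` (hence `= q(K,H)`). -/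
theorem exists_min_measure {X : Type*}
    [TopologicalSpace X] [T2Space X] [LocallyCompactSpace X]
    [MeasurableSpace X] [BorelSpace X]
    (k : X → X → ℝ≥0∞) (hk_sym : ∀ x y, k x y = k y x)
    (hk_lsc : LowerSemicontinuous fun p : X × X => k p.1 p.2)
    (H : Set X) (K : Set X) (hK : IsCompact K) (hKne : K.Nonempty) :
    ∃ μ : Measure X, μ ∈ M1 K ∧ Qsup k μ H ≤ qHL k K H ∧ Qsup k μ H = qHL k K H := by
  classical
  set q := qHL k K H with hqdef
  suffices hs : ∃ μ : Measure X, μ ∈ M1 K ∧ Qsup k μ H ≤ q by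
    obtain ⟨μ, hμ, hle⟩ := hs
    refine ⟨μ, hμ, hle, le_antisymm hle ?_⟩
    rw [hqdef, qHL]
    exact iInf₂_le μ hμ
  obtain ⟨x₀, hx₀⟩ := hKne
  by_cases hqtop : q = ⊤
  · refine ⟨Measure.dirac x₀, ⟨inferInstance, ?_⟩, ?_⟩
    · rw [Measure.dirac_apply' _ hK.isClosed.measurableSet]
      simp [hx₀]
    · rw [hqtop]; exact le_top
  -- a minimizing sequence
  have hseq : ∀ n : ℕ, ∃ ν : Measure X, ν ∈ M1 K ∧ Qsup k ν H ≤ q + ((n : ℝ≥0∞) + 1)⁻¹ := by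
    intro n
    have hpos : ((n : ℝ≥0∞) + 1)⁻¹ ≠ 0 :=
      ENNReal.inv_ne_zero.mpr
        (ENNReal.add_ne_top.mpr ⟨ENNReal.natCast_ne_top n, one_ne_top⟩)
    have hlt : q < q + ((n : ℝ≥0∞) + 1)⁻¹ := ENNReal.lt_add_right hqtop hpos
    rw [hqdef, qHL] at hlt
    simp only [iInf_lt_iff] at hlt
    obtain ⟨ν, hν, hlt⟩ := hlt
    exact ⟨ν, hν, hlt.le⟩
  choose μs hμsM hμsQ using hseq
  have hμsK : ∀ n, μs n K = 1 := fun n => (hμsM n).2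
  have hμs1 : ∀ n (C : Set X), μs n C ≤ 1 := by
    intro n C
    haveI := (hμsM n).1
    exact prob_le_one
  -- ultrafilter limit
  set φ : Ultrafilter ℕ := Ultrafilter.of atTop with hφdef
  have hφ : (φ : Filter ℕ) ≤ atTop := Ultrafilter.of_le _
  set ℓ : Set X → ℝ≥0∞ := fun C => (φ.map (fun n => μs n C)).lim with hℓdef
  have hℓ : ∀ C : Set X, Tendsto (fun n => μs n C) (φ : Filter ℕ) (𝓝 (ℓ C)) :=
    fun C => (φ.map (fun n => μs n C)).le_nhds_lim
  have hℓ1 : ∀ C, ℓ C ≤ 1 := fun C => le_of_tendsto' (hℓ C) (fun n => hμs1 n C)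
  have hℓtop : ∀ C, ℓ C ≠ ⊤ := fun C => ((hℓ1 C).trans_lt ENNReal.one_lt_top).ne
  -- the limit content
  set Λ : Content X :=
    { toFun := fun C => (ℓ (C : Set X)).toNNReal
      mono' := by
        intro C₁ C₂ hsub
        have h12 : ℓ (C₁ : Set X) ≤ ℓ (C₂ : Set X) :=
          le_of_tendsto_of_tendsto' (hℓ C₁) (hℓ C₂) (fun n => measure_mono hsub)
        exact ENNReal.toNNReal_mono (hℓtop _) h12
      sup_disjoint' := by
        intro C₁ C₂ hdis _h₁ h₂
        have heq : (fun n => μs n ((C₁ ⊔ C₂ : Compacts X) : Set X))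
            = fun n => μs n (C₁ : Set X) + μs n (C₂ : Set X) := by
          funext n
          rw [Compacts.coe_sup]
          exact measure_union hdis h₂.measurableSet
        have h0 := hℓ ((C₁ ⊔ C₂ : Compacts X) : Set X)
        rw [heq] at h0
        have hE : ℓ ((C₁ ⊔ C₂ : Compacts X) : Set X) = ℓ (C₁ : Set X) + ℓ (C₂ : Set X) :=
          tendsto_nhds_unique h0 ((hℓ (C₁ : Set X)).add (hℓ (C₂ : Set X)))
        show (ℓ ((C₁ ⊔ C₂ : Compacts X) : Set X)).toNNReal
            = (ℓ (C₁ : Set X)).toNNReal + (ℓ (C₂ : Set X)).toNNReal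
        rw [hE, ENNReal.toNNReal_add (hℓtop _) (hℓtop _)]
      sup_le' := by
        intro C₁ C₂
        have hle : ℓ ((C₁ ⊔ C₂ : Compacts X) : Set X) ≤ ℓ (C₁ : Set X) + ℓ (C₂ : Set X) := by
          refine le_of_tendsto_of_tendsto' (hℓ _) ((hℓ (C₁ : Set X)).add (hℓ (C₂ : Set X))) ?_
          intro n
          rw [Compacts.coe_sup]
          exact measure_union_le _ _
        have h2 := ENNReal.toNNReal_mono (ENNReal.add_ne_top.mpr ⟨hℓtop _, hℓtop _⟩) hle
        rw [ENNReal.toNNReal_add (hℓtop _) (hℓtop _)] at h2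
        exact h2 } with hΛdef
  have hΛ : ∀ C : Compacts X, (Λ C : ℝ≥0∞) = ℓ (C : Set X) := by
    intro C
    show ((Λ.toFun C : NNReal) : ℝ≥0∞) = _
    rw [hΛdef]
    exact ENNReal.coe_toNNReal (hℓtop _)
  set μ : Measure X := Λ.measure with hμdef
  -- μ is a probability measure concentrated on K
  have hμuniv : μ Set.univ ≤ 1 := by
    rw [hμdef, Λ.measure_apply MeasurableSet.univ,
      Λ.outerMeasure_of_isOpen Set.univ isOpen_univ]
    exact iSup₂_le fun C _ => (hΛ C) ▸ hℓ1 (C : Set X)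
  have hℓK : ℓ K = 1 := by
    have hconst : (fun n => μs n K) = fun _ => (1 : ℝ≥0∞) := funext hμsK
    have h0 := hℓ K
    rw [hconst] at h0
    exact tendsto_nhds_unique h0 tendsto_const_nhds
  have hμK : 1 ≤ μ K := by
    calc (1 : ℝ≥0∞) = (Λ ⟨K, hK⟩ : ℝ≥0∞) := by rw [hΛ]; exact hℓK.symm
      _ ≤ Λ.outerMeasure K := Λ.le_outerMeasure_compacts ⟨K, hK⟩
      _ = μ K := (Λ.measure_apply hK.isClosed.measurableSet).symm
  have hprob : IsProbabilityMeasure μ :=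
    ⟨le_antisymm hμuniv (hμK.trans (measure_mono (subset_univ K)))⟩
  have hμKone : μ K = 1 :=
    le_antisymm ((measure_mono (subset_univ K)).trans hμuniv) hμK
  -- the key potential bound
  have hpot : ∀ x ∈ H, potential k μ x ≤ q := by
    intro x hx
    set g : X → ℝ≥0∞ := fun y => k x y with hgdef
    have hg_lsc : LowerSemicontinuous g :=
      hk_lsc.comp (Continuous.prodMk_right x)
    have hgn : ∀ n, ∫⁻ y, g y ∂(μs n) ≤ q + ((n : ℝ≥0∞) + 1)⁻¹ := by
      intro n
      refine le_trans ?_ (hμsQ n)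
      rw [Qsup]
      exact le_iSup₂ (f := fun x _ => potential k (μs n) x) x hx
    suffices hδbound : ∀ δ : ℝ≥0∞, δ ≠ 0 → δ ≠ ⊤ → ∫⁻ y, g y ∂μ ≤ q + δ by
      refine ENNReal.le_of_forall_pos_le_add fun ε hε _ => ?_
      exact hδbound ε (by exact_mod_cast hε.ne') coe_ne_top
    intro δ hδ0 hδtop
    set V : ℕ → Set X := fun j => {y | ((j : ℝ≥0∞) + 1) * δ < g y} with hVdef
    have hVopen : ∀ j, IsOpen (V j) := fun j =>
      hg_lsc.isOpen_preimage (((j : ℝ≥0∞) + 1) * δ)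
    have hVmeas : ∀ j, MeasurableSet (V j) := fun j => (hVopen j).measurableSet
    -- the series bound
    have hsum : ∑' j : ℕ, δ * μ (V j) ≤ q := by
      rw [ENNReal.tsum_eq_iSup_sum]
      refine iSup_le fun s => ?_
      refine ENNReal.le_of_forall_pos_le_add fun ε hε hq' => ?_
      obtain ⟨ε₀, hε₀pos, hε₀⟩ : ∃ ε₀ : NNReal, ε₀ ≠ 0 ∧ (s.card : ℝ≥0∞) * δ * ε₀ ≤ ε := by
        set d : ℝ≥0∞ := (s.card : ℝ≥0∞) * δ + 1 with hd
        have hdt : d ≠ ⊤ := by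
          rw [hd]
          exact ENNReal.add_ne_top.mpr
            ⟨ENNReal.mul_ne_top (ENNReal.natCast_ne_top _) hδtop, one_ne_top⟩
        have hεpos : (0 : ℝ≥0∞) < (ε : ℝ≥0∞) / d :=
          ENNReal.div_pos (by exact_mod_cast hε.ne') hdt
        obtain ⟨ε₀, h0, h1⟩ := ENNReal.lt_iff_exists_nnreal_btwn.mp hεpos
        refine ⟨ε₀, by exact_mod_cast h0.ne', ?_⟩
        calc (s.card : ℝ≥0∞) * δ * ε₀ ≤ d * ((ε : ℝ≥0∞) / d) :=
            mul_le_mul' (by rw [hd]; exact le_self_add) h1.le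
          _ ≤ ε := ENNReal.mul_div_le
      have hinner : ∀ j : ℕ, ∃ D : Compacts X,
          (D : Set X) ⊆ V j ∧ μ (V j) ≤ (Λ D : ℝ≥0∞) + ε₀ := by
        intro j
        have hop : μ (V j) = Λ.innerContent ⟨V j, hVopen j⟩ := by
          rw [hμdef, Λ.measure_apply (hVmeas j), Λ.outerMeasure_of_isOpen _ (hVopen j)]
        have hfin : Λ.innerContent ⟨V j, hVopen j⟩ ≠ ⊤ := by
          rw [← hop]
          exact (((measure_mono (subset_univ _)).trans hμuniv).trans_lt ENNReal.one_lt_top).ne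
        obtain ⟨D, hD1, hD2⟩ := Λ.innerContent_exists_compact hfin hε₀pos
        exact ⟨D, hD1, by rw [hop]; exact hD2⟩
      choose D hD1 hD2 using hinner
      have hkey : ∑ j ∈ s, δ * (Λ (D j) : ℝ≥0∞) ≤ q := by
        have htends : Tendsto (fun n => ∑ j ∈ s, δ * μs n ((D j : Set X)))
            (φ : Filter ℕ) (𝓝 (∑ j ∈ s, δ * (Λ (D j) : ℝ≥0∞))) := by
          refine tendsto_finset_sum s fun j _ => ?_
          rw [hΛ]
          exact ENNReal.Tendsto.const_mul (hℓ (D j : Set X)) (Or.inr hδtop)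
        have hboundn : ∀ n, ∑ j ∈ s, δ * μs n ((D j : Set X))
            ≤ q + ((n : ℝ≥0∞) + 1)⁻¹ := by
          intro n
          refine le_trans ?_ (hgn n)
          have hcongr : ∀ j ∈ s, δ * μs n ((D j : Set X))
              = ∫⁻ y, (D j : Set X).indicator (fun _ => δ) y ∂(μs n) := by
            intro j _
            rw [lintegral_indicator_const ((D j).isCompact.isClosed.measurableSet)]
          rw [Finset.sum_congr rfl hcongr, ← lintegral_finset_sum]
          · refine lintegral_mono fun y => ?_
            refine count_aux δ (g y) s (fun j => (D j : Set X)) y ?_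
            intro j hyj
            have := hD1 j hyj
            rw [hVdef] at this
            exact this
          · exact fun j _ => measurable_const.indicator ((D j).isCompact.isClosed.measurableSet)
        refine ENNReal.le_of_forall_pos_le_add fun η hη hq'' => ?_
        refine le_of_tendsto htends ?_
        have htend0 : Tendsto (fun n : ℕ => ((n : ℝ≥0∞) + 1)⁻¹) atTop (𝓝 0) := by
          have h1 : Tendsto (fun n : ℕ => ((n + 1 : ℕ) : ℝ≥0∞)⁻¹) atTop (𝓝 0) :=
            ENNReal.tendsto_inv_nat_nhds_zero.comp (tendsto_add_atTop_nat 1)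
          convert h1 using 2 with n
          push_cast
          ring
        have hev : ∀ᶠ n : ℕ in atTop, ((n : ℝ≥0∞) + 1)⁻¹ ≤ (η : ℝ≥0∞) :=
          Filter.Tendsto.eventually_le_const
            (show (0 : ℝ≥0∞) < (η : ℝ≥0∞) by exact_mod_cast hη) htend0
        refine (Filter.Eventually.filter_mono hφ hev).mono fun n hn => ?_
        exact (hboundn n).trans (add_le_add_right hn q)
      calc ∑ j ∈ s, δ * μ (V j)
          ≤ ∑ j ∈ s, (δ * (Λ (D j) : ℝ≥0∞) + δ * ε₀) := by
            refine Finset.sum_le_sum fun j _ => ?_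
            rw [← mul_add]
            exact mul_le_mul_right (hD2 j) δ
        _ = (∑ j ∈ s, δ * (Λ (D j) : ℝ≥0∞)) + s.card • (δ * (ε₀ : ℝ≥0∞)) := by
            rw [Finset.sum_add_distrib, Finset.sum_const]
        _ ≤ q + ε := by
            refine add_le_add hkey ?_
            rw [nsmul_eq_mul, ← mul_assoc]
            exact hε₀
    -- assemble via the pointwise layer-cake bound
    have hpt : ∀ y, g y ≤ δ + ∑' j : ℕ, (V j).indicator (fun _ => δ) y := by
      intro y
      have hco : ∀ j : ℕ, ({i : ℕ | ((i : ℝ≥0∞) + 1) * δ < g y}).indicator (fun _ => δ) j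
          = (V j).indicator (fun _ => δ) y := by
        intro j
        by_cases hj : ((j : ℝ≥0∞) + 1) * δ < g y
        · rw [Set.indicator_of_mem
              (show j ∈ {i : ℕ | ((i : ℝ≥0∞) + 1) * δ < g y} from hj) (fun _ => δ),
            Set.indicator_of_mem (show y ∈ V j from hj) (fun _ => δ)]
        · rw [Set.indicator_of_notMem
              (show j ∉ {i : ℕ | ((i : ℝ≥0∞) + 1) * δ < g y} from hj) (fun _ => δ),
            Set.indicator_of_notMem (show y ∉ V j from hj) (fun _ => δ)]
      exact (layer_aux δ (g y) hδ0).trans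
        (le_of_eq (congrArg (fun z => δ + z) (tsum_congr hco)))
    have hmeasind : ∀ j : ℕ, Measurable fun y => (V j).indicator (fun _ => δ) y :=
      fun j => measurable_const.indicator (hVmeas j)
    calc ∫⁻ y, g y ∂μ
        ≤ ∫⁻ y, (δ + ∑' j : ℕ, (V j).indicator (fun _ => δ) y) ∂μ := lintegral_mono hpt
      _ = δ * μ Set.univ + ∫⁻ y, ∑' j : ℕ, (V j).indicator (fun _ => δ) y ∂μ := by
          rw [lintegral_add_left measurable_const, lintegral_const]
      _ = δ * μ Set.univ + ∑' j : ℕ, ∫⁻ y, (V j).indicator (fun _ => δ) y ∂μ := by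
          rw [lintegral_tsum fun j => (hmeasind j).aemeasurable]
      _ = δ * μ Set.univ + ∑' j : ℕ, δ * μ (V j) := by
          congr 1
          exact tsum_congr fun j => lintegral_indicator_const (hVmeas j) δ
      _ ≤ δ * 1 + q := add_le_add (mul_le_mul_right hμuniv δ) hsum
      _ = q + δ := by rw [mul_one, add_comm]
  refine ⟨μ, ⟨hprob, hμKone⟩, ?_⟩
  rw [Qsup]
  exact iSup₂_le hpot

end Rendezvous
end

section
/- Let X be a locally compact Hausdorff space, k : X × X → [0,∞) a continuous, symmetric, nonnegative kernel, H ⊆ X arbitrary and K ⊆ X a nonempty compact set, and assume k is bounded on K × H (i.e., there is a constant C with k(x,y) ≤ C for all x ∈ K, y ∈ H). Then there exists ν ∈ 𝔐₁(K) attaining the supremum defining q̲(K,H): namely, U^ν(y) ≥ q̲(K,H) for every y ∈ H. -/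
open MeasureTheory Set Filter Topology ENNReal
open NNReal

namespace Rendezvous

variable {X : Type*} [MeasurableSpace X]

set_option linter.unusedSectionVars false

section Aux
open NNReal


/-! ### Ultrafilter limits in `ℝ≥0∞` -/

section LimU

variable (𝒰 : Ultrafilter ℕ)

noncomputable def limU (u : ℕ → ℝ≥0∞) : ℝ≥0∞ := limUnder (𝒰 : Filter ℕ) u

theorem tendsto_limU (u : ℕ → ℝ≥0∞) : Tendsto u 𝒰 (𝓝 (limU 𝒰 u)) := by
  apply tendsto_nhds_limUnder
  obtain ⟨x, -, hx⟩ := isCompact_univ.ultrafilter_le_nhds (𝒰.map u) (by simp)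
  exact ⟨x, hx⟩

theorem limU_const (c : ℝ≥0∞) : limU 𝒰 (fun _ => c) = c :=
  tendsto_nhds_unique (tendsto_limU 𝒰 _) tendsto_const_nhds

theorem limU_mono {u v : ℕ → ℝ≥0∞} (h : ∀ n, u n ≤ v n) : limU 𝒰 u ≤ limU 𝒰 v :=
  le_of_tendsto_of_tendsto' (tendsto_limU 𝒰 u) (tendsto_limU 𝒰 v) h

theorem le_limU {u : ℕ → ℝ≥0∞} {c : ℝ≥0∞} (h : ∀ᶠ n in (𝒰 : Filter ℕ), c ≤ u n) :
    c ≤ limU 𝒰 u :=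
  ge_of_tendsto (tendsto_limU 𝒰 u) h

theorem limU_le {u : ℕ → ℝ≥0∞} {c : ℝ≥0∞} (h : ∀ n, u n ≤ c) : limU 𝒰 u ≤ c :=
  le_of_tendsto (tendsto_limU 𝒰 u) (Eventually.of_forall h)

theorem limU_add (u v : ℕ → ℝ≥0∞) : limU 𝒰 (fun n => u n + v n) = limU 𝒰 u + limU 𝒰 v :=
  tendsto_nhds_unique (tendsto_limU 𝒰 _) ((tendsto_limU 𝒰 u).add (tendsto_limU 𝒰 v))

theorem limU_const_mul {c : ℝ≥0∞} (hc : c ≠ ∞) (u : ℕ → ℝ≥0∞) :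
    limU 𝒰 (fun n => c * u n) = c * limU 𝒰 u := by
  rcases eq_or_ne c 0 with rfl | hc0
  · simp [limU_const]
  · exact tendsto_nhds_unique (tendsto_limU 𝒰 _)
      (ENNReal.Tendsto.const_mul (tendsto_limU 𝒰 u) (Or.inr hc))

theorem limU_sum {ι : Type*} (s : Finset ι) (f : ι → ℕ → ℝ≥0∞) :
    limU 𝒰 (fun n => ∑ j ∈ s, f j n) = ∑ j ∈ s, limU 𝒰 (f j) := by
  classical
  induction s using Finset.induction_on with
  | empty => simp [limU_const]
  | insert a s' hj ih =>
      simp only [Finset.sum_insert hj]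
      rw [← ih, ← limU_add]

end LimU



/-! ### A Riesz-type content from an ultrafilter limit of probability measures -/

section RContent

variable {X : Type*} [TopologicalSpace X] [MeasurableSpace X] [BorelSpace X]
  (𝒰 : Ultrafilter ℕ) (ν : ℕ → Measure X)

/-- The admissible test functions for a set `s`: continuous, `≤ 1`, and `= 1` on `s`. -/
def testFns (s : Set X) : Set C(X, ℝ≥0) :=
  {f | (∀ x, f x ≤ 1) ∧ ∀ x ∈ s, f x = 1}

theorem one_mem_testFns (s : Set X) : (1 : C(X, ℝ≥0)) ∈ testFns s :=
  ⟨fun _ => le_rfl, fun _ _ => rfl⟩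

/-- The Riesz-type outer quantity on (compact) sets. -/
noncomputable def rlam (s : Set X) : ℝ≥0∞ :=
  ⨅ f ∈ testFns s, limU 𝒰 (fun n => ∫⁻ x, (f x : ℝ≥0∞) ∂(ν n))

theorem lintegral_testFn_le {f : C(X, ℝ≥0)} (hf : ∀ x : X, f x ≤ 1)
    (μ : Measure X) [IsProbabilityMeasure μ] : ∫⁻ x, (f x : ℝ≥0∞) ∂μ ≤ 1 := by
  calc ∫⁻ x, (f x : ℝ≥0∞) ∂μ ≤ ∫⁻ _, 1 ∂μ :=
        lintegral_mono fun x => ENNReal.coe_le_one_iff.mpr (hf x)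
    _ = 1 := by simp

variable (hprob : ∀ n, IsProbabilityMeasure (ν n))

include hprob

theorem rlam_le_one (s : Set X) : rlam 𝒰 ν s ≤ 1 := by
  refine iInf₂_le_of_le 1 (one_mem_testFns s) (limU_le 𝒰 fun n => ?_)
  have := hprob n
  simpa using lintegral_testFn_le (f := (1 : C(X, ℝ≥0))) (fun _ => le_rfl) (ν n)

omit hprob

theorem rlam_mono {s t : Set X} (h : s ⊆ t) : rlam 𝒰 ν s ≤ rlam 𝒰 ν t := by
  refine le_iInf₂ fun f hf => iInf₂_le f ⟨hf.1, fun x hx => hf.2 x (h hx)⟩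

theorem limU_meas_le_rlam {s : Set X} (hs : MeasurableSet s) :
    limU 𝒰 (fun n => ν n s) ≤ rlam 𝒰 ν s := by
  refine le_iInf₂ fun f hf => limU_mono 𝒰 fun n => ?_
  calc ν n s = ∫⁻ x, s.indicator 1 x ∂(ν n) := (lintegral_indicator_one hs).symm
    _ ≤ ∫⁻ x, (f x : ℝ≥0∞) ∂(ν n) := by
        refine lintegral_mono fun x => ?_
        by_cases hx : x ∈ s
        · simp [Set.indicator_of_mem hx, hf.2 x hx]
        · simp [Set.indicator_of_notMem hx]

include hprob

theorem rlam_union_le (s t : Set X) :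
    rlam 𝒰 ν (s ∪ t) ≤ rlam 𝒰 ν s + rlam 𝒰 ν t := by
  refine ENNReal.le_of_forall_pos_le_add fun ε hε _ => ?_
  have hhalf : (0:ℝ≥0∞) < (ε:ℝ≥0∞)/2 := by
    simp [ENNReal.div_pos_iff, hε.ne']
  -- extract near optimal test functions
  have hs : rlam 𝒰 ν s < rlam 𝒰 ν s + (ε:ℝ≥0∞)/2 :=
    ENNReal.lt_add_right (lt_of_le_of_lt (rlam_le_one 𝒰 ν hprob s) one_lt_top).ne hhalf.ne'
  have ht : rlam 𝒰 ν t < rlam 𝒰 ν t + (ε:ℝ≥0∞)/2 :=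
    ENNReal.lt_add_right (lt_of_le_of_lt (rlam_le_one 𝒰 ν hprob t) one_lt_top).ne hhalf.ne'
  rw [rlam, iInf_lt_iff] at hs ht
  obtain ⟨f, hf'⟩ := hs
  rw [iInf_lt_iff] at hf'
  obtain ⟨hf, hfval⟩ := hf'
  obtain ⟨g, hg'⟩ := ht
  rw [iInf_lt_iff] at hg'
  obtain ⟨hg, hgval⟩ := hg'
  have hmem : f ⊔ g ∈ testFns (s ∪ t) := by
    constructor
    · intro x
      simp only [ContinuousMap.sup_apply, sup_le_iff]
      exact ⟨hf.1 x, hg.1 x⟩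
    · rintro x (hx | hx)
      · simp only [ContinuousMap.sup_apply]
        exact le_antisymm (sup_le (hf.1 x) (hg.1 x)) (le_sup_of_le_left (hf.2 x hx).ge)
      · simp only [ContinuousMap.sup_apply]
        exact le_antisymm (sup_le (hf.1 x) (hg.1 x)) (le_sup_of_le_right (hg.2 x hx).ge)
  have hint : ∀ n, ∫⁻ x, ((f ⊔ g) x : ℝ≥0∞) ∂(ν n)
      ≤ (∫⁻ x, (f x : ℝ≥0∞) ∂(ν n)) + ∫⁻ x, (g x : ℝ≥0∞) ∂(ν n) := by
    intro n
    rw [← lintegral_add_left (f.continuous.measurable.coe_nnreal_ennreal)]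
    refine lintegral_mono fun x => ?_
    simp only [ContinuousMap.sup_apply]
    have h1 : f x ⊔ g x ≤ f x + g x := sup_le le_self_add le_add_self
    calc ((f x ⊔ g x : ℝ≥0) : ℝ≥0∞) ≤ ((f x + g x : ℝ≥0) : ℝ≥0∞) := ENNReal.coe_le_coe.mpr h1
      _ = (f x : ℝ≥0∞) + (g x : ℝ≥0∞) := ENNReal.coe_add (f x) (g x)
  calc rlam 𝒰 ν (s ∪ t) ≤ limU 𝒰 (fun n => ∫⁻ x, ((f ⊔ g) x : ℝ≥0∞) ∂(ν n)) :=
        iInf₂_le _ hmem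
    _ ≤ limU 𝒰 (fun n => (∫⁻ x, (f x : ℝ≥0∞) ∂(ν n)) + ∫⁻ x, (g x : ℝ≥0∞) ∂(ν n)) :=
        limU_mono 𝒰 hint
    _ = limU 𝒰 (fun n => ∫⁻ x, (f x : ℝ≥0∞) ∂(ν n))
        + limU 𝒰 (fun n => ∫⁻ x, (g x : ℝ≥0∞) ∂(ν n)) := limU_add 𝒰 _ _
    _ ≤ (rlam 𝒰 ν s + (ε:ℝ≥0∞)/2) + (rlam 𝒰 ν t + (ε:ℝ≥0∞)/2) :=
        add_le_add hfval.le hgval.le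
    _ = rlam 𝒰 ν s + rlam 𝒰 ν t + (ε:ℝ≥0∞) := by
        rw [add_add_add_comm, ENNReal.add_halves]

omit hprob in
theorem rlam_disjoint_add [T2Space X] [LocallyCompactSpace X] {s t : Set X}
    (hs : IsCompact s) (ht : IsClosed t) (hd : Disjoint s t) :
    rlam 𝒰 ν s + rlam 𝒰 ν t ≤ rlam 𝒰 ν (s ∪ t) := by
  refine le_iInf₂ fun f hf => ?_
  obtain ⟨g0, hg1, hg0, -, hg01⟩ := exists_continuous_one_zero_of_isCompact hs ht hd
  set g : C(X, ℝ≥0) := ⟨fun x => Real.toNNReal (g0 x),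
    continuous_real_toNNReal.comp g0.continuous⟩ with hgdef
  have hgle : ∀ x, g x ≤ 1 := by
    intro x
    simp only [hgdef, ContinuousMap.coe_mk]
    rw [show (1 : ℝ≥0) = Real.toNNReal 1 by simp]
    exact Real.toNNReal_mono (hg01 x).2
  have hgs : ∀ x ∈ s, g x = 1 := by
    intro x hx
    simp only [hgdef, ContinuousMap.coe_mk]
    rw [hg1 hx]
    simp
  have hgt : ∀ x ∈ t, g x = 0 := by
    intro x hx
    simp only [hgdef, ContinuousMap.coe_mk]
    rw [hg0 hx]
    simp
  have hf1 : f * g ∈ testFns s := by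
    constructor
    · intro x
      simp only [ContinuousMap.mul_apply]
      calc f x * g x ≤ 1 * 1 := mul_le_mul' (hf.1 x) (hgle x)
        _ = 1 := one_mul 1
    · intro x hx
      simp only [ContinuousMap.mul_apply, hf.2 x (Or.inl hx), hgs x hx, one_mul]
  have hf2 : f * (1 - g) ∈ testFns t := by
    constructor
    · intro x
      simp only [ContinuousMap.mul_apply, ContinuousMap.sub_apply, ContinuousMap.one_apply]
      calc f x * (1 - g x) ≤ 1 * 1 := mul_le_mul' (hf.1 x) tsub_le_self
        _ = 1 := one_mul 1
    · intro x hx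
      simp only [ContinuousMap.mul_apply, ContinuousMap.sub_apply, ContinuousMap.one_apply,
        hf.2 x (Or.inr hx), hgt x hx, one_mul, tsub_zero]
  have hsplit : ∀ x, ((f * g) x : ℝ≥0∞) + ((f * (1 - g)) x : ℝ≥0∞) = (f x : ℝ≥0∞) := by
    intro x
    rw [← ENNReal.coe_add]
    congr 1
    simp only [ContinuousMap.mul_apply, ContinuousMap.sub_apply, ContinuousMap.one_apply]
    rw [← mul_add, add_tsub_cancel_of_le (hgle x), mul_one]
  have hint : ∀ n, (∫⁻ x, ((f * g) x : ℝ≥0∞) ∂(ν n))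
      + (∫⁻ x, ((f * (1 - g)) x : ℝ≥0∞) ∂(ν n)) = ∫⁻ x, (f x : ℝ≥0∞) ∂(ν n) := by
    intro n
    rw [← lintegral_add_left ((f * g).continuous.measurable.coe_nnreal_ennreal)]
    exact lintegral_congr fun x => hsplit x
  calc rlam 𝒰 ν s + rlam 𝒰 ν t
      ≤ limU 𝒰 (fun n => ∫⁻ x, ((f * g) x : ℝ≥0∞) ∂(ν n))
        + limU 𝒰 (fun n => ∫⁻ x, ((f * (1 - g)) x : ℝ≥0∞) ∂(ν n)) :=
        add_le_add (iInf₂_le _ hf1) (iInf₂_le _ hf2)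
    _ = limU 𝒰 (fun n => (∫⁻ x, ((f * g) x : ℝ≥0∞) ∂(ν n))
        + ∫⁻ x, ((f * (1 - g)) x : ℝ≥0∞) ∂(ν n)) := (limU_add 𝒰 _ _).symm
    _ = limU 𝒰 (fun n => ∫⁻ x, (f x : ℝ≥0∞) ∂(ν n)) := by
        congr 1
        funext n
        exact hint n

include hprob

theorem rlam_ne_top (s : Set X) : rlam 𝒰 ν s ≠ ∞ :=
  (lt_of_le_of_lt (rlam_le_one 𝒰 ν hprob s) one_lt_top).ne

/-- The content induced by an ultrafilter limit of probability measures. -/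
noncomputable def rcontent [T2Space X] [LocallyCompactSpace X] : Content X where
  toFun C := (rlam 𝒰 ν C).toNNReal
  mono' K₁ K₂ h :=
    ENNReal.toNNReal_mono (rlam_ne_top 𝒰 ν hprob _) (rlam_mono 𝒰 ν h)
  sup_disjoint' K₁ K₂ hd h₁ h₂ := by
    have he : rlam 𝒰 ν (↑K₁ ∪ ↑K₂) = rlam 𝒰 ν K₁ + rlam 𝒰 ν K₂ :=
      le_antisymm (rlam_union_le 𝒰 ν hprob _ _)
        (rlam_disjoint_add 𝒰 ν K₁.2 h₂ hd)
    show (rlam 𝒰 ν (↑K₁ ∪ ↑K₂)).toNNReal = _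
    rw [he, ENNReal.toNNReal_add (rlam_ne_top 𝒰 ν hprob _) (rlam_ne_top 𝒰 ν hprob _)]
  sup_le' K₁ K₂ := by
    have := rlam_union_le 𝒰 ν hprob (K₁ : Set X) (K₂ : Set X)
    have h2 : (rlam 𝒰 ν (↑K₁ ∪ ↑K₂)).toNNReal
        ≤ (rlam 𝒰 ν ↑K₁ + rlam 𝒰 ν ↑K₂).toNNReal :=
      ENNReal.toNNReal_mono
        (by simp [ENNReal.add_ne_top, rlam_ne_top 𝒰 ν hprob]) this
    rw [ENNReal.toNNReal_add (rlam_ne_top 𝒰 ν hprob _) (rlam_ne_top 𝒰 ν hprob _)] at h2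
    exact h2

theorem rcontent_apply [T2Space X] [LocallyCompactSpace X] (C : TopologicalSpace.Compacts X) :
    (rcontent 𝒰 ν hprob C : ℝ≥0∞) = rlam 𝒰 ν C :=
  ENNReal.coe_toNNReal (rlam_ne_top 𝒰 ν hprob _)

end RContent



theorem sum_ite_le (δ t : ℝ≥0∞) :
    ∀ N : ℕ, (∑ j ∈ Finset.Icc 1 N, if (j : ℝ≥0∞) * δ < t then δ else 0) ≤ t := by
  intro N
  induction N with
  | zero => simp
  | succ N ih =>
      rw [Finset.sum_Icc_succ_top (Nat.le_add_left 1 N)]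
      split_ifs with h
      · have hsum : (∑ j ∈ Finset.Icc 1 N, if (j : ℝ≥0∞) * δ < t then δ else 0)
            ≤ (N : ℝ≥0∞) * δ := by
          have := Finset.sum_le_card_nsmul (Finset.Icc 1 N)
            (fun j => if (j : ℝ≥0∞) * δ < t then δ else 0) δ
            (fun j _ => by split_ifs <;> simp)
          rw [Nat.card_Icc] at this
          simpa [nsmul_eq_mul] using this
        calc (∑ j ∈ Finset.Icc 1 N, if (j : ℝ≥0∞) * δ < t then δ else 0) + δ
            ≤ (N : ℝ≥0∞) * δ + δ := add_le_add_left hsum δ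
          _ = ((N : ℝ≥0∞) + 1) * δ := by rw [add_one_mul]
          _ ≤ t := by
              refine le_of_lt ?_
              convert h using 2
              push_cast
              ring
      · simpa using ih

theorem le_sum_ite (δ : ℝ≥0∞) :
    ∀ (N : ℕ) (t : ℝ≥0∞), t ≤ (N : ℝ≥0∞) * δ →
      t ≤ 2 * δ + ∑ j ∈ Finset.Icc 1 N, if ((j : ℝ≥0∞) + 1) * δ < t then δ else 0 := by
  intro N
  induction N with
  | zero => intro t ht; simp only [Nat.cast_zero, zero_mul, nonpos_iff_eq_zero] at ht
            simp [ht]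
  | succ N ih =>
      intro t ht
      by_cases h : t ≤ (N : ℝ≥0∞) * δ
      · refine (ih t h).trans (add_le_add_right ?_ _)
        exact Finset.sum_le_sum_of_subset (Finset.Icc_subset_Icc_right (N.le_succ))
      · push_neg at h
        rcases Nat.eq_zero_or_pos N with rfl | hN
        · have h1 : t ≤ 2 * δ := by
            refine ht.trans ?_
            have : ((0 + 1 : ℕ) : ℝ≥0∞) = 1 := by norm_num
            rw [this, one_mul]
            calc δ = 1 * δ := (one_mul δ).symm
              _ ≤ 2 * δ := by gcongr <;> norm_num
          exact le_add_right h1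
        · obtain ⟨M, rfl⟩ := Nat.exists_eq_add_of_le hN
          have hterm : ∀ j ∈ Finset.Icc 1 M, (if ((j : ℝ≥0∞) + 1) * δ < t then δ else 0) = δ := by
            intro j hj
            rw [Finset.mem_Icc] at hj
            have : ((j : ℝ≥0∞) + 1) * δ ≤ ((1 + M : ℕ) : ℝ≥0∞) * δ := by
              gcongr
              push_cast
              have : (j : ℝ≥0∞) ≤ (M : ℝ≥0∞) := by exact_mod_cast hj.2
              calc (j : ℝ≥0∞) + 1 ≤ (M : ℝ≥0∞) + 1 := by gcongr
                _ = 1 + (M : ℝ≥0∞) := add_comm _ _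
            exact if_pos (lt_of_le_of_lt this h)
          have hsum : (M : ℝ≥0∞) * δ
              ≤ ∑ j ∈ Finset.Icc 1 (1 + M + 1), if ((j : ℝ≥0∞) + 1) * δ < t then δ else 0 := by
            calc (M : ℝ≥0∞) * δ
                = ∑ j ∈ Finset.Icc 1 M, if ((j : ℝ≥0∞) + 1) * δ < t then δ else 0 := by
                  rw [Finset.sum_congr rfl hterm, Finset.sum_const, Nat.card_Icc,
                    nsmul_eq_mul]
                  simp
              _ ≤ _ := Finset.sum_le_sum_of_subset
                  (Finset.Icc_subset_Icc_right (by omega))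
          calc t ≤ ((1 + M + 1 : ℕ) : ℝ≥0∞) * δ := ht
            _ = 2 * δ + (M : ℝ≥0∞) * δ := by push_cast; ring
            _ ≤ 2 * δ + _ := add_le_add_right hsum _


end Aux

set_option maxHeartbeats 2000000

/-- For a continuous, symmetric, nonnegative (finite-valued) kernel which
is bounded on `K × H`, with `K` nonempty compact, the supremum defining `q̲(K,H)` is
attained: there is `ν ∈ 𝔐₁(K)` with `U^ν(y) ≥ q̲(K,H)` for every `y ∈ H`. -/
theorem exists_max_measure {X : Type*}
    [TopologicalSpace X] [T2Space X] [LocallyCompactSpace X]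
    [MeasurableSpace X] [BorelSpace X]
    (k : X → X → ℝ≥0∞)
    (hk_cont : Continuous fun p : X × X => k p.1 p.2)
    (hk_sym : ∀ x y, k x y = k y x)
    (hk_fin : ∀ x y, k x y ≠ ∞)
    (H : Set X) (K : Set X) (hK : IsCompact K) (hKne : K.Nonempty)
    (C : ℝ≥0∞) (hC : C ≠ ∞) (hbdd : ∀ x ∈ K, ∀ y ∈ H, k x y ≤ C) :
    ∃ ν : Measure X, ν ∈ M1 K ∧ ∀ y ∈ H, qlowHL k K H ≤ potential k ν y := by
  classical
  obtain ⟨x₀, hx₀⟩ := hKne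
  have hKcl : IsClosed K := hK.isClosed
  have hKm : MeasurableSet K := hKcl.measurableSet
  have hdiracM1 : (MeasureTheory.Measure.dirac x₀) ∈ M1 K :=
    ⟨by infer_instance, MeasureTheory.Measure.dirac_apply_of_mem hx₀⟩
  rcases Set.eq_empty_or_nonempty H with rfl | ⟨y₀, hy₀⟩
  · exact ⟨MeasureTheory.Measure.dirac x₀, hdiracM1,
      fun y hy => absurd hy (Set.notMem_empty y)⟩
  set q := qlowHL k K H with hq
  -- The null complement of `K` for measures in `M1 K`.
  have hcompl : ∀ (μ : Measure X), μ ∈ M1 K → μ Kᶜ = 0 := by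
    intro μ hμ
    have : IsProbabilityMeasure μ := hμ.1
    rw [measure_compl hKm (by rw [hμ.2]; exact one_ne_top), measure_univ, hμ.2, tsub_self]
  -- potentials of measures in `M1 K` are bounded by `C` on `H`
  have hpotbd : ∀ (μ : Measure X), μ ∈ M1 K → ∀ y ∈ H, potential k μ y ≤ C := by
    intro μ hμ y hy
    have : IsProbabilityMeasure μ := hμ.1
    have hae : ∀ᵐ x ∂μ, k y x ≤ C := by
      rw [MeasureTheory.ae_iff]
      refine measure_mono_null (fun x hx => ?_) (hcompl μ hμ)
      simp only [Set.mem_setOf_eq, not_le] at hx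
      intro hxK
      exact absurd ((hk_sym y x).symm ▸ hbdd x hxK y hy) (not_le.mpr hx)
    calc potential k μ y ≤ ∫⁻ _, C ∂μ := lintegral_mono_ae hae
      _ = C := by simp
  have hqC : q ≤ C := by
    rw [hq, qlowHL]
    refine iSup₂_le fun μ hμ => ?_
    exact le_trans (iInf₂_le y₀ hy₀) (hpotbd μ hμ y₀ hy₀)
  have hqtop : q ≠ ∞ := (lt_of_le_of_lt hqC hC.lt_top).ne
  -- a maximizing sequence
  have hseq : ∀ n : ℕ, ∃ μ : Measure X,
      μ ∈ M1 K ∧ q - 1 / ((n : ℝ≥0∞) + 1) ≤ Qinf k μ H := by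
    intro n
    by_cases hq0 : q = 0
    · exact ⟨MeasureTheory.Measure.dirac x₀, hdiracM1, by simp [hq0]⟩
    · have hlt : q - 1 / ((n : ℝ≥0∞) + 1) < q := by
        refine ENNReal.sub_lt_self hqtop hq0 ?_
        simp [ENNReal.div_eq_top]
      rw [hq, qlowHL, lt_iSup_iff] at hlt
      obtain ⟨μ, hμ⟩ := hlt
      rw [lt_iSup_iff] at hμ
      obtain ⟨hμM, hlt2⟩ := hμ
      exact ⟨μ, hμM, hlt2.le⟩
  choose ν hνM hνq using hseq
  have hprob : ∀ n, IsProbabilityMeasure (ν n) := fun n => (hνM n).1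
  have hνKc : ∀ n, ν n Kᶜ = 0 := fun n => hcompl (ν n) (hνM n)
  -- the ultrafilter and the limit measure
  set 𝒰 : Ultrafilter ℕ := Ultrafilter.of atTop with h𝒰def
  have h𝒰le : (𝒰 : Filter ℕ) ≤ atTop := Ultrafilter.of_le atTop
  set μC := rcontent 𝒰 ν hprob with hμCdef
  set W : Measure X := μC.measure with hWdef
  have hWopen : ∀ (U : Set X) (hU : IsOpen U),
      W U = μC.innerContent ⟨U, hU⟩ := by
    intro U hU
    rw [hWdef, MeasureTheory.Content.measure_apply _ hU.measurableSet,
      MeasureTheory.Content.outerMeasure_of_isOpen _ _ hU]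
  have hWle : ∀ (U : Set X) (hU : IsOpen U), W U ≤ 1 := by
    intro U hU
    rw [hWopen U hU]
    refine iSup₂_le fun D _ => ?_
    beta_reduce
    rw [show μC D = rlam 𝒰 ν D from rcontent_apply 𝒰 ν hprob D]
    exact rlam_le_one 𝒰 ν hprob D
  have hWuniv : W Set.univ = 1 := by
    refine le_antisymm (hWle _ isOpen_univ) ?_
    rw [hWopen _ isOpen_univ]
    refine le_trans ?_ (Content.le_innerContent μC ⟨K, hK⟩ ⟨Set.univ, isOpen_univ⟩
      (Set.subset_univ K))
    beta_reduce
    rw [show μC ⟨K, hK⟩ = rlam 𝒰 ν K from rcontent_apply 𝒰 ν hprob ⟨K, hK⟩]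
    refine le_trans ?_ (limU_meas_le_rlam 𝒰 ν hKm)
    have : (fun n => ν n K) = fun _ => (1 : ℝ≥0∞) := by
      funext n
      exact (hνM n).2
    rw [this, limU_const]
  have hWKc : W Kᶜ = 0 := by
    rw [hWopen _ hKcl.isOpen_compl]
    refine le_antisymm (iSup₂_le fun D hD => ?_) zero_le
    beta_reduce
    rw [show μC D = rlam 𝒰 ν D from rcontent_apply 𝒰 ν hprob D]
    -- Urysohn: a test function vanishing on K
    obtain ⟨g0, hg1, hg0, -, hg01⟩ := exists_continuous_one_zero_of_isCompact D.2 hKcl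
      (Set.subset_compl_iff_disjoint_right.mp hD)
    set f : C(X, ℝ≥0) := ⟨fun x => Real.toNNReal (g0 x),
      continuous_real_toNNReal.comp g0.continuous⟩ with hfdef
    have hfmem : f ∈ testFns (D : Set X) := by
      constructor
      · intro x
        simp only [hfdef, ContinuousMap.coe_mk]
        rw [show (1 : ℝ≥0) = Real.toNNReal 1 by simp]
        exact Real.toNNReal_mono (hg01 x).2
      · intro x hx
        simp only [hfdef, ContinuousMap.coe_mk]
        rw [hg1 hx]
        simp
    have hint0 : ∀ n, ∫⁻ x, (f x : ℝ≥0∞) ∂(ν n) = 0 := by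
      intro n
      rw [lintegral_eq_zero_iff (f.continuous.measurable.coe_nnreal_ennreal)]
      rw [Filter.EventuallyEq, MeasureTheory.ae_iff]
      refine measure_mono_null (fun x hx => ?_) (hνKc n)
      simp only [Set.mem_setOf_eq] at hx
      intro hxK
      refine hx ?_
      simp only [hfdef, ContinuousMap.coe_mk, Pi.zero_apply]
      rw [hg0 hxK]
      simp
    refine le_trans (iInf₂_le f hfmem) ?_
    refine le_of_eq ?_
    have : (fun n => ∫⁻ x, (f x : ℝ≥0∞) ∂(ν n)) = fun _ => (0 : ℝ≥0∞) := funext hint0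
    rw [this, limU_const]
  have hWK : W K = 1 := by
    refine le_antisymm ?_ ?_
    · calc W K ≤ W Set.univ := measure_mono (Set.subset_univ K)
        _ = 1 := hWuniv
    · calc (1 : ℝ≥0∞) = W Set.univ := hWuniv.symm
        _ ≤ W K + W Kᶜ := by
            rw [← Set.union_compl_self K]
            exact measure_union_le K Kᶜ
        _ = W K := by rw [hWKc, add_zero]
  have hWprob : IsProbabilityMeasure W := ⟨hWuniv⟩
  refine ⟨W, ⟨hWprob, hWK⟩, ?_⟩
  intro y hy
  -- the potential estimate
  set g : X → ℝ≥0∞ := fun x => k y x with hgdef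
  have hgc : Continuous g := hk_cont.comp (Continuous.prodMk_right y)
  have hgK : ∀ x ∈ K, g x ≤ C := by
    intro x hx
    show k y x ≤ C
    rw [hk_sym y x]
    exact hbdd x hx y hy
  have hint_ge : ∀ n : ℕ, q - 1 / ((n : ℝ≥0∞) + 1) ≤ ∫⁻ x, g x ∂(ν n) := fun n =>
    le_trans (hνq n) (iInf₂_le y hy)
  have hLq : q ≤ limU 𝒰 (fun n => ∫⁻ x, g x ∂(ν n)) := by
    refine ENNReal.le_of_forall_pos_le_add fun ε hε _ => ?_
    obtain ⟨m, hm⟩ := ENNReal.exists_nat_gt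
      (show (ε : ℝ≥0∞)⁻¹ ≠ ∞ by simp [hε.ne'])
    have hev : ∀ᶠ n in (atTop : Filter ℕ), q - (ε : ℝ≥0∞) ≤ ∫⁻ x, g x ∂(ν n) := by
      rw [Filter.eventually_atTop]
      refine ⟨m, fun n hn => le_trans ?_ (hint_ge n)⟩
      refine tsub_le_tsub_left ?_ q
      rw [one_div, ENNReal.inv_le_iff_inv_le]
      calc (ε : ℝ≥0∞)⁻¹ ≤ (m : ℝ≥0∞) := hm.le
        _ ≤ (n : ℝ≥0∞) := by exact_mod_cast hn
        _ ≤ (n : ℝ≥0∞) + 1 := le_self_add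
    have hlim := le_limU 𝒰 (hev.filter_mono h𝒰le)
    calc q ≤ (q - (ε : ℝ≥0∞)) + ε := le_tsub_add
      _ ≤ limU 𝒰 (fun n => ∫⁻ x, g x ∂(ν n)) + ε := add_le_add_left hlim ε
  have key : ∀ δ : ℝ≥0∞, 0 < δ → δ ≠ ∞ → q ≤ (∫⁻ x, g x ∂W) + 2 * δ := by
    intro δ hδ0 hδtop
    obtain ⟨N, hN⟩ := ENNReal.exists_nat_gt (show C / δ ≠ ∞ from
      (ENNReal.div_lt_top hC hδ0.ne').ne)
    have hCN : C ≤ (N : ℝ≥0∞) * δ :=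
      le_of_lt ((ENNReal.div_lt_iff (Or.inl hδ0.ne') (Or.inl hδtop)).mp hN)
    set U : ℕ → Set X := fun m => {x | (m : ℝ≥0∞) * δ < g x} with hUdef
    have hUopen : ∀ m, IsOpen (U m) := fun m => isOpen_lt continuous_const hgc
    have hUmeas : ∀ m, MeasurableSet (U m) := fun m => (hUopen m).measurableSet
    have hcast : ∀ j : ℕ, (((j + 1 : ℕ)) : ℝ≥0∞) = (j : ℝ≥0∞) + 1 := by
      intro j; push_cast; ring
    -- lower bound for the limit measure integral
    have hI1 : (∑ j ∈ Finset.Icc 1 N, δ * W (U j)) ≤ ∫⁻ x, g x ∂W := by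
      have hpt : ∀ x, (∑ j ∈ Finset.Icc 1 N, (U j).indicator (fun _ => δ) x) ≤ g x := by
        intro x
        refine le_trans (le_of_eq (Finset.sum_congr rfl fun j _ => ?_)) (sum_ite_le δ (g x) N)
        by_cases hx : x ∈ U j
        · rw [Set.indicator_of_mem hx, if_pos (show ((j : ℝ≥0∞)) * δ < g x from hx)]
        · rw [Set.indicator_of_notMem hx,
            if_neg (show ¬ ((j : ℝ≥0∞)) * δ < g x from hx)]
      calc ∑ j ∈ Finset.Icc 1 N, δ * W (U j)
          = ∑ j ∈ Finset.Icc 1 N, ∫⁻ x, (U j).indicator (fun _ => δ) x ∂W :=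
            Finset.sum_congr rfl fun j _ => (lintegral_indicator_const (hUmeas j) δ).symm
        _ = ∫⁻ x, ∑ j ∈ Finset.Icc 1 N, (U j).indicator (fun _ => δ) x ∂W :=
            (lintegral_finset_sum _ fun j _ => measurable_const.indicator (hUmeas j)).symm
        _ ≤ ∫⁻ x, g x ∂W := lintegral_mono hpt
    -- upper bound for the approximating integrals
    have hI2 : ∀ n, (∫⁻ x, g x ∂(ν n))
        ≤ 2 * δ + ∑ j ∈ Finset.Icc 1 N, δ * (ν n) (U (j + 1)) := by
      intro n
      have hpt : ∀ x ∈ K,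
          g x ≤ 2 * δ + ∑ j ∈ Finset.Icc 1 N, (U (j + 1)).indicator (fun _ => δ) x := by
        intro x hx
        refine le_trans (le_sum_ite δ N (g x) (le_trans (hgK x hx) hCN)) (le_of_eq ?_)
        congr 1
        refine Finset.sum_congr rfl fun j _ => ?_
        have hiff : (((j : ℝ≥0∞) + 1) * δ < g x) ↔ x ∈ U (j + 1) := by
          rw [hUdef]
          simp only [Set.mem_setOf_eq, hcast j]
        by_cases hxj : x ∈ U (j + 1)
        · rw [Set.indicator_of_mem hxj, if_pos (hiff.mpr hxj)]
        · rw [Set.indicator_of_notMem hxj, if_neg (fun hc => hxj (hiff.mp hc))]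
      have hae : ∀ᵐ x ∂(ν n),
          g x ≤ 2 * δ + ∑ j ∈ Finset.Icc 1 N, (U (j + 1)).indicator (fun _ => δ) x := by
        rw [MeasureTheory.ae_iff]
        refine measure_mono_null (fun x hx => ?_) (hνKc n)
        simp only [Set.mem_setOf_eq, not_le] at hx
        intro hxK
        exact absurd (hpt x hxK) (not_le.mpr hx)
      calc ∫⁻ x, g x ∂(ν n)
          ≤ ∫⁻ x, (2 * δ + ∑ j ∈ Finset.Icc 1 N, (U (j + 1)).indicator (fun _ => δ) x) ∂(ν n) :=
            lintegral_mono_ae hae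
        _ = 2 * δ + ∑ j ∈ Finset.Icc 1 N, δ * (ν n) (U (j + 1)) := by
            rw [lintegral_add_left measurable_const, lintegral_const, measure_univ, mul_one]
            congr 1
            rw [lintegral_finset_sum _ fun j _ => measurable_const.indicator (hUmeas (j + 1))]
            exact Finset.sum_congr rfl fun j _ => lintegral_indicator_const (hUmeas (j + 1)) δ
    -- the bridge through the content
    have hI3 : ∀ j : ℕ, limU 𝒰 (fun n => (ν n) (U (j + 1))) ≤ W (U j) := by
      intro j
      set D : Set X := K ∩ {x | ((j : ℝ≥0∞) + 1) * δ ≤ g x} with hDdef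
      have hDcomp : IsCompact D := hK.inter_right (isClosed_le continuous_const hgc)
      have hDm : MeasurableSet D := hDcomp.isClosed.measurableSet
      have hDU : D ⊆ U j := by
        intro x hx
        have h1 : (j : ℝ≥0∞) * δ < ((j : ℝ≥0∞) + 1) * δ := by
          rw [add_one_mul]
          exact ENNReal.lt_add_right
            (ENNReal.mul_ne_top (ENNReal.natCast_ne_top j) hδtop) hδ0.ne'
        exact lt_of_lt_of_le h1 hx.2
      have hsub : ∀ n, (ν n) (U (j + 1)) ≤ (ν n) D := by
        intro n
        calc (ν n) (U (j + 1)) ≤ (ν n) ((U (j + 1) ∩ K) ∪ Kᶜ) := by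
              refine measure_mono fun x hx => ?_
              by_cases hxK : x ∈ K
              · exact Or.inl ⟨hx, hxK⟩
              · exact Or.inr hxK
          _ ≤ (ν n) (U (j + 1) ∩ K) + (ν n) Kᶜ := measure_union_le _ _
          _ = (ν n) (U (j + 1) ∩ K) := by rw [hνKc n, add_zero]
          _ ≤ (ν n) D := by
              refine measure_mono fun x hx => ⟨hx.2, ?_⟩
              have := hx.1
              rw [hUdef] at this
              simp only [Set.mem_setOf_eq] at this
              rw [hcast j] at this
              exact this.le
      calc limU 𝒰 (fun n => (ν n) (U (j + 1))) ≤ limU 𝒰 (fun n => (ν n) D) :=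
            limU_mono 𝒰 hsub
        _ ≤ rlam 𝒰 ν D := limU_meas_le_rlam 𝒰 ν hDm
        _ = μC ⟨D, hDcomp⟩ := (rcontent_apply 𝒰 ν hprob ⟨D, hDcomp⟩).symm
        _ ≤ μC.innerContent ⟨U j, hUopen j⟩ :=
            Content.le_innerContent μC ⟨D, hDcomp⟩ ⟨U j, hUopen j⟩ hDU
        _ = W (U j) := (hWopen (U j) (hUopen j)).symm
    -- combine
    calc q ≤ limU 𝒰 (fun n => ∫⁻ x, g x ∂(ν n)) := hLq
      _ ≤ limU 𝒰 (fun n => 2 * δ + ∑ j ∈ Finset.Icc 1 N, δ * (ν n) (U (j + 1))) :=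
          limU_mono 𝒰 hI2
      _ = 2 * δ + ∑ j ∈ Finset.Icc 1 N, δ * limU 𝒰 (fun n => (ν n) (U (j + 1))) := by
          refine tendsto_nhds_unique (tendsto_limU 𝒰 _) ?_
          refine Filter.Tendsto.add tendsto_const_nhds ?_
          refine tendsto_finset_sum _ fun j _ => ?_
          exact ENNReal.Tendsto.const_mul (tendsto_limU 𝒰 _) (Or.inr hδtop)
      _ ≤ 2 * δ + ∑ j ∈ Finset.Icc 1 N, δ * W (U j) :=
          add_le_add_right (Finset.sum_le_sum fun j _ => mul_le_mul_right (hI3 j) δ) _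
      _ ≤ 2 * δ + ∫⁻ x, g x ∂W := add_le_add_right hI1 _
      _ = (∫⁻ x, g x ∂W) + 2 * δ := add_comm _ _
  have hfinal : q ≤ ∫⁻ x, g x ∂W := by
    refine ENNReal.le_of_forall_pos_le_add fun ε hε _ => ?_
    have h2 : (2 : ℝ≥0∞) * ((ε : ℝ≥0∞) / 2) = (ε : ℝ≥0∞) := by
      rw [ENNReal.mul_div_cancel'] <;> norm_num
    have := key ((ε : ℝ≥0∞) / 2)
      (ENNReal.div_pos_iff.mpr ⟨by exact_mod_cast hε.ne', by norm_num⟩)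
      (by simp [ENNReal.div_eq_top])
    rwa [h2] at this
  exact hfinal


end Rendezvous
end

section
/- Let X be a Hausdorff topological space (not necessarily locally compact), k a symmetric, lower semicontinuous function k : X × X → [0,∞], and H, L ⊆ X. Assume the average set A(H,L) = ⋂_{μ∈𝔐₁(H)} [Q̲(μ,L), Q(μ,L)] is nonempty. Let ε_n → 0 be a sequence of positive reals, and for each n let μ_n ∈ 𝔐₁(H) be ε_n-quasi-invariant on L, i.e., Q(μ_n,L) − Q̲(μ_n,L) ≤ ε_n, and let ρ_n be a value attained by the potential U^{μ_n} at some point of L. Then A(H,L) consists of a single point a(H,L), and ρ_n → a(H,L) as n → ∞. -/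
open MeasureTheory Set Filter Topology ENNReal

namespace Rendezvous

variable {X : Type*} [MeasurableSpace X]

/-- In a Hausdorff space (not necessarily locally compact), if the
average set `A(H,L)` is nonempty and there are `ε_n`-quasi-invariant measures
`μ_n ∈ 𝔐₁(H)` on `L` with `ε_n → 0`, then `A(H,L)` is a singleton `{a}` and any values
`ρ_n = U^{μ_n}(x_n)` attained on `L` converge to `a`. -/
theorem quasi_invariant_limit {X : Type*}
    [TopologicalSpace X] [T2Space X] [MeasurableSpace X] [BorelSpace X]
    (k : X → X → ℝ≥0∞) (hk_sym : ∀ x y, k x y = k y x)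
    (hk_lsc : LowerSemicontinuous fun p : X × X => k p.1 p.2)
    (H L : Set X)
    (hA : ∃ a : ℝ≥0∞, ∀ μ ∈ M1 H, Qinf k μ L ≤ a ∧ a ≤ Qsup k μ L)
    (ε : ℕ → ℝ≥0∞) (hε_pos : ∀ n, 0 < ε n) (hε : Tendsto ε atTop (𝓝 0))
    (μ : ℕ → Measure X) (hμ : ∀ n, μ n ∈ M1 H)
    (hquasi : ∀ n, Qsup k (μ n) L ≤ Qinf k (μ n) L + ε n)
    (x : ℕ → X) (hx : ∀ n, x n ∈ L) :
    ∃ a : ℝ≥0∞,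
      {r : ℝ≥0∞ | ∀ μ' ∈ M1 H, Qinf k μ' L ≤ r ∧ r ≤ Qsup k μ' L} = {a} ∧
      Tendsto (fun n => potential k (μ n) (x n)) atTop (𝓝 a) := by
  obtain ⟨a, ha⟩ := hA
  have hadd : Tendsto (fun n => a + ε n) atTop (𝓝 a) := by
    have := Tendsto.const_add a hε
    simpa using this
  have key : ∀ r s : ℝ≥0∞, (∀ μ' ∈ M1 H, Qinf k μ' L ≤ r ∧ r ≤ Qsup k μ' L) →
      (∀ μ' ∈ M1 H, Qinf k μ' L ≤ s ∧ s ≤ Qsup k μ' L) → r ≤ s := by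
    intro r s hr hs
    have hlim : Tendsto (fun n => s + ε n) atTop (𝓝 s) := by
      have := Tendsto.const_add s hε
      simpa using this
    refine ge_of_tendsto' hlim fun n => ?_
    calc r ≤ Qsup k (μ n) L := (hr _ (hμ n)).2
      _ ≤ Qinf k (μ n) L + ε n := hquasi n
      _ ≤ s + ε n := add_le_add_left (hs _ (hμ n)).1 _
  refine ⟨a, ?_, ?_⟩
  · ext r
    simp only [Set.mem_setOf_eq, Set.mem_singleton_iff]
    constructor
    · intro hr
      exact le_antisymm (key r a hr ha) (key a r ha hr)
    · rintro rfl
      exact ha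
  · have hlow : ∀ n, Qinf k (μ n) L ≤ potential k (μ n) (x n) :=
      fun n => iInf₂_le (x n) (hx n)
    have hhigh : ∀ n, potential k (μ n) (x n) ≤ Qsup k (μ n) L :=
      fun n => le_iSup₂ (f := fun y (_ : y ∈ L) => potential k (μ n) y) (x n) (hx n)
    have hsub : Tendsto (fun n => a - ε n) atTop (𝓝 a) := by
      have := ENNReal.Tendsto.sub (tendsto_const_nhds (x := a)) hε
        (Or.inr (by simp))
      simpa using this
    refine tendsto_of_tendsto_of_tendsto_of_le_of_le hsub hadd ?_ ?_
    · intro n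
      rw [tsub_le_iff_right]
      calc a ≤ Qsup k (μ n) L := (ha _ (hμ n)).2
        _ ≤ Qinf k (μ n) L + ε n := hquasi n
        _ ≤ potential k (μ n) (x n) + ε n := add_le_add_left (hlow n) _
    · intro n
      calc potential k (μ n) (x n) ≤ Qsup k (μ n) L := hhigh n
        _ ≤ Qinf k (μ n) L + ε n := hquasi n
        _ ≤ a + ε n := add_le_add_left (ha _ (hμ n)).1 _


end Rendezvous
end
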